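/- arXiv:2006.10975 — 2 statements merged into one kernel-verified Lean document; each statement's English description precedes it below -/
import Mathlib

section
/- Let e ≥ 0 be an integer. Let A = ℤ[a_0,a_1,a_2,b_0,b_1,b_2, (u_α), (v_α)] be the polynomial ring over ℤ in the indeterminates a_0,a_1,a_2,b_0,b_1,b_2 together with indeterminates u_α and v_α indexed by the multi-indices α ∈ ℕ³ with α_0+α_1+α_2 = e. Set m_0 = a_1b_2 − a_2b_1, m_1 = a_2b_0 − a_0b_2, m_2 = a_0b_1 − a_1b_0 (the signed 2×2 minors of the matrix with rows (a_0,a_1,a_2) and (b_0,b_1,b_2)). Let q = Σ_{|α|=e} u_α·y_0^{α_0}y_1^{α_1}y_2^{α_2} and r = Σ_{|α|=e} v_α·y_0^{α_0}y_1^{α_1}y_2^{α_2} be the generic ternary forms of degree e, and let q(m_0,m_1,m_2) and r(m_0,m_1,m_2) denote their evaluations at y_i = m_i. Then the polynomial m_0·q(m_0,m_1,m_2) − m_1·r(m_0,m_1,m_2) is an irreducible element of A. -/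
open MvPolynomial Polynomial

namespace MinorAux

variable {σ : Type*} [DecidableEq σ]

/-- View a multivariate polynomial as a polynomial in the single variable `x`,
with coefficients that are multivariate polynomials (not involving `x`). -/
noncomputable def theta (x : σ) : MvPolynomial σ ℤ →ₐ[ℤ] Polynomial (MvPolynomial σ ℤ) :=
  MvPolynomial.aeval (fun y => if y = x then Polynomial.X else Polynomial.C (MvPolynomial.X y))

/-- Substitute `c` for the variable `x`. -/
noncomputable def sub (x : σ) (c : MvPolynomial σ ℤ) :
    MvPolynomial σ ℤ →ₐ[ℤ] MvPolynomial σ ℤ :=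
  MvPolynomial.aeval (fun y => if y = x then c else MvPolynomial.X y)

@[simp] lemma theta_X_self (x : σ) : theta x (MvPolynomial.X x) = Polynomial.X := by
  simp [theta]

lemma theta_X_ne {x y : σ} (h : y ≠ x) :
    theta x (MvPolynomial.X y) = Polynomial.C (MvPolynomial.X y) := by
  simp [theta, h]

@[simp] lemma sub_X_self (x : σ) (c : MvPolynomial σ ℤ) : sub x c (MvPolynomial.X x) = c := by
  simp [sub]

lemma sub_X_ne {x y : σ} (c : MvPolynomial σ ℤ) (h : y ≠ x) :
    sub x c (MvPolynomial.X y) = MvPolynomial.X y := by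
  simp [sub, h]

lemma eval₂_theta (x : σ) (c : MvPolynomial σ ℤ) (q : MvPolynomial σ ℤ) :
    Polynomial.eval₂ (RingHom.id _) c (theta x q) = sub x c q := by
  have key : (Polynomial.eval₂RingHom (RingHom.id (MvPolynomial σ ℤ)) c).comp
      (theta x : MvPolynomial σ ℤ →+* Polynomial (MvPolynomial σ ℤ)) =
      (sub x c : MvPolynomial σ ℤ →+* MvPolynomial σ ℤ) := by
    apply MvPolynomial.ringHom_ext
    · intro r
      simp [theta, sub, MvPolynomial.aeval_C]
    · intro y
      by_cases h : y = x
      · subst h; simp [theta, sub]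
      · simp [theta_X_ne h, sub_X_ne _ h]
  have := RingHom.congr_fun key q
  simpa using this

lemma sub_X_eq_self (x : σ) (q : MvPolynomial σ ℤ) : sub x (MvPolynomial.X x) q = q := by
  have : (fun y => if y = x then MvPolynomial.X x else MvPolynomial.X y)
      = (MvPolynomial.X : σ → MvPolynomial σ ℤ) := by
    funext y; by_cases h : y = x <;> simp [h]
  rw [sub, this, MvPolynomial.aeval_X_left_apply]

lemma theta_id (x : σ) (q : MvPolynomial σ ℤ) :
    Polynomial.eval₂ (RingHom.id _) (MvPolynomial.X x) (theta x q) = q := by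
  rw [eval₂_theta, sub_X_eq_self]

/-- If `d` divides a nonzero polynomial `p` not involving the variable `x`,
then `d` does not involve `x` either (expressed via `theta`). -/
lemma theta_eq_C_of_dvd {x : σ} {d p : MvPolynomial σ ℤ} (hdvd : d ∣ p) (hp : p ≠ 0)
    (hfix : theta x p = Polynomial.C p) : theta x d = Polynomial.C d := by
  obtain ⟨k, rfl⟩ := hdvd
  have hprod : theta x d * theta x k = Polynomial.C (d * k) := by
    rw [← map_mul]; exact hfix
  have hne : theta x d * theta x k ≠ 0 := by
    rw [hprod]
    exact fun h => hp (Polynomial.C_injective (by simpa using h))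
  have hd0 : theta x d ≠ 0 := fun h => hne (by rw [h, zero_mul])
  have hk0 : theta x k ≠ 0 := fun h => hne (by rw [h, mul_zero])
  have hdeg : (theta x d).natDegree + (theta x k).natDegree = 0 := by
    rw [← Polynomial.natDegree_mul hd0 hk0, hprod, Polynomial.natDegree_C]
  obtain ⟨a, ha⟩ := Polynomial.natDegree_eq_zero.mp (Nat.eq_zero_of_add_eq_zero_right hdeg)
  have had : a = d := by
    have := theta_id x d
    rw [← ha, Polynomial.eval₂_C] at this
    simpa using this
  rw [← ha, had]

lemma sub_eq_self_of_dvd {x : σ} {d p : MvPolynomial σ ℤ} (hdvd : d ∣ p) (hp : p ≠ 0)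
    (hfix : theta x p = Polynomial.C p) (c : MvPolynomial σ ℤ) : sub x c d = d := by
  rw [← eval₂_theta, theta_eq_C_of_dvd hdvd hp hfix, Polynomial.eval₂_C]
  rfl

/-- Simultaneous substitution of scalar constants for finitely many variables can be done
one variable at a time. -/
lemma aeval_eq_self_of_sub_eq_self {K : Finset σ} {g : MvPolynomial σ ℤ}
    (hsub : ∀ x ∈ K, ∀ c : MvPolynomial σ ℤ, sub x c g = g)
    {f : σ → MvPolynomial σ ℤ}
    (hf1 : ∀ y, y ∉ K → f y = MvPolynomial.X y)
    (hf2 : ∀ y ∈ K, ∃ n : ℤ, f y = MvPolynomial.C n) :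
    MvPolynomial.aeval f g = g := by
  classical
  induction K using Finset.induction_on generalizing f with
  | empty =>
      have : f = (MvPolynomial.X : σ → MvPolynomial σ ℤ) := by
        funext y; exact hf1 y (by simp)
      rw [this, MvPolynomial.aeval_X_left_apply]
  | @insert x K' hxK' ih =>
      set f' : σ → MvPolynomial σ ℤ := fun y => if y = x then MvPolynomial.X y else f y with hf'
      obtain ⟨n, hn⟩ := hf2 x (Finset.mem_insert_self x K')
      have hstep : MvPolynomial.aeval f g =
          MvPolynomial.aeval f' (sub x (f x) g) := by
        rw [sub]
        have hcomp := MvPolynomial.comp_aeval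
          (f := fun y => if y = x then f x else MvPolynomial.X y)
          (φ := MvPolynomial.aeval f' (R := ℤ) (σ := σ))
        have := AlgHom.congr_fun hcomp g
        rw [AlgHom.coe_comp, Function.comp_apply] at this
        rw [this]
        have hfe : (fun i => (MvPolynomial.aeval f') (if i = x then f x else MvPolynomial.X i))
            = f := by
          funext y
          by_cases h : y = x
          · subst h
            simp only [if_pos rfl, hn, MvPolynomial.aeval_C]
            simp
          · simp only [if_neg h, MvPolynomial.aeval_X, hf', if_neg h]
        rw [hfe]
      rw [hstep, hsub x (Finset.mem_insert_self x K') (f x)]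
      apply ih
      · intro z hz c
        exact hsub z (Finset.mem_insert_of_mem hz) c
      · intro y hy
        by_cases h : y = x
        · subst h; simp [hf']
        · have hni : y ∉ insert x K' := by simp [h, hy]
          simp only [hf', if_neg h, hf1 y hni]
      · intro y hy
        have h : y ≠ x := fun hyx => hxK' (hyx ▸ hy)
        refine ⟨(hf2 y (Finset.mem_insert_of_mem hy)).choose, ?_⟩
        simp only [hf', if_neg h]
        exact (hf2 y (Finset.mem_insert_of_mem hy)).choose_spec

lemma theta_quad {x i j k l : σ} (hi : i ≠ x) (hj : j ≠ x) (hk : k ≠ x) (hl : l ≠ x) :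
    theta x (MvPolynomial.X i * MvPolynomial.X j - MvPolynomial.X k * MvPolynomial.X l)
      = Polynomial.C (MvPolynomial.X i * MvPolynomial.X j
          - MvPolynomial.X k * MvPolynomial.X l) := by
  rw [map_sub, map_mul, map_mul, theta_X_ne hi, theta_X_ne hj, theta_X_ne hk, theta_X_ne hl,
    ← map_mul, ← map_mul, ← map_sub]

/-- A common divisor of the two generic `2×2` minors is a unit. -/
lemma isUnit_of_dvd_minors {v : Fin 6 → σ} (hv : Function.Injective v)
    {d : MvPolynomial σ ℤ}
    (h0 : d ∣ (MvPolynomial.X (v 1) * MvPolynomial.X (v 5)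
      - MvPolynomial.X (v 2) * MvPolynomial.X (v 4)))
    (h1 : d ∣ (MvPolynomial.X (v 2) * MvPolynomial.X (v 3)
      - MvPolynomial.X (v 0) * MvPolynomial.X (v 5))) :
    IsUnit d := by
  have ne : ∀ {i j : Fin 6}, i ≠ j → v i ≠ v j := fun hij h => hij (hv h)
  set m0 : MvPolynomial σ ℤ := MvPolynomial.X (v 1) * MvPolynomial.X (v 5)
      - MvPolynomial.X (v 2) * MvPolynomial.X (v 4) with hm0
  set m1 : MvPolynomial σ ℤ := MvPolynomial.X (v 2) * MvPolynomial.X (v 3)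
      - MvPolynomial.X (v 0) * MvPolynomial.X (v 5) with hm1
  have hXX : ∀ i j : σ, MvPolynomial.X i * MvPolynomial.X j ≠ (0 : MvPolynomial σ ℤ) :=
    fun i j => mul_ne_zero (MvPolynomial.X_ne_zero i) (MvPolynomial.X_ne_zero j)
  have hm0ne : m0 ≠ 0 := by
    intro h
    have h2 : sub (v 2) 0 m0 = MvPolynomial.X (v 1) * MvPolynomial.X (v 5) := by
      rw [hm0, map_sub, map_mul, map_mul, sub_X_self, sub_X_ne _ (ne (by decide)),
        sub_X_ne _ (ne (by decide)), sub_X_ne _ (ne (by decide)), zero_mul, sub_zero]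
    rw [h, map_zero] at h2
    exact hXX _ _ h2.symm
  have hm1ne : m1 ≠ 0 := by
    intro h
    have h2 : sub (v 0) 0 m1 = MvPolynomial.X (v 2) * MvPolynomial.X (v 3) := by
      rw [hm1, map_sub, map_mul, map_mul, sub_X_self, sub_X_ne _ (ne (by decide)),
        sub_X_ne _ (ne (by decide)), sub_X_ne _ (ne (by decide)), zero_mul, sub_zero]
    rw [h, map_zero] at h2
    exact hXX _ _ h2.symm
  -- d is invariant under substitutions in variables `v 1` and `v 4` (not appearing in m1)
  have u1 : ∀ c, sub (v 1) c d = d := fun c =>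
    sub_eq_self_of_dvd h1 hm1ne (theta_quad (ne (by decide)) (ne (by decide))
      (ne (by decide)) (ne (by decide))) c
  have u4 : ∀ c, sub (v 4) c d = d := fun c =>
    sub_eq_self_of_dvd h1 hm1ne (theta_quad (ne (by decide)) (ne (by decide))
      (ne (by decide)) (ne (by decide))) c
  -- and in `v 0`, `v 3` (not appearing in m0)
  have u0 : ∀ c, sub (v 0) c d = d := fun c =>
    sub_eq_self_of_dvd h0 hm0ne (theta_quad (ne (by decide)) (ne (by decide))
      (ne (by decide)) (ne (by decide))) c
  have u3 : ∀ c, sub (v 3) c d = d := fun c =>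
    sub_eq_self_of_dvd h0 hm0ne (theta_quad (ne (by decide)) (ne (by decide))
      (ne (by decide)) (ne (by decide))) c
  -- d divides X (v 5)
  have hA : d ∣ MvPolynomial.X (v 5) := by
    have s1 : sub (v 1) 1 m0 = MvPolynomial.X (v 5)
        - MvPolynomial.X (v 2) * MvPolynomial.X (v 4) := by
      rw [hm0, map_sub, map_mul, map_mul, sub_X_self, sub_X_ne _ (ne (by decide)),
        sub_X_ne _ (ne (by decide)), sub_X_ne _ (ne (by decide)), one_mul]
    have d1 : d ∣ MvPolynomial.X (v 5) - MvPolynomial.X (v 2) * MvPolynomial.X (v 4) := by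
      rw [← s1, ← u1 1]; exact map_dvd _ h0
    have s2 : sub (v 4) 0 (MvPolynomial.X (v 5)
        - MvPolynomial.X (v 2) * MvPolynomial.X (v 4)) = MvPolynomial.X (v 5) := by
      rw [map_sub, map_mul, sub_X_self, sub_X_ne _ (ne (by decide)),
        sub_X_ne _ (ne (by decide)), mul_zero, sub_zero]
    rw [← s2, ← u4 0]; exact map_dvd _ d1
  -- d divides X (v 2)
  have hB : d ∣ MvPolynomial.X (v 2) := by
    have s1 : sub (v 0) 0 m1 = MvPolynomial.X (v 2) * MvPolynomial.X (v 3) := by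
      rw [hm1, map_sub, map_mul, map_mul, sub_X_self, sub_X_ne _ (ne (by decide)),
        sub_X_ne _ (ne (by decide)), sub_X_ne _ (ne (by decide)), zero_mul, sub_zero]
    have d1 : d ∣ MvPolynomial.X (v 2) * MvPolynomial.X (v 3) := by
      rw [← s1, ← u0 0]; exact map_dvd _ h1
    have s2 : sub (v 3) 1 (MvPolynomial.X (v 2) * MvPolynomial.X (v 3))
        = MvPolynomial.X (v 2) := by
      rw [map_mul, sub_X_self, sub_X_ne _ (ne (by decide)), mul_one]
    rw [← s2, ← u3 1]; exact map_dvd _ d1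
  -- from d ∣ X (v 2): d is invariant under substitution in v 5; then d ∣ 1
  have u5 : ∀ c, sub (v 5) c d = d := fun c =>
    sub_eq_self_of_dvd hB (MvPolynomial.X_ne_zero _)
      (by rw [theta_X_ne (ne (by decide))]) c
  have : d ∣ (1 : MvPolynomial σ ℤ) := by
    have s2 : sub (v 5) 1 (MvPolynomial.X (v 5)) = 1 := by rw [sub_X_self]
    rw [← s2, ← u5 1]; exact map_dvd _ hA
  exact isUnit_of_dvd_one this

end MinorAux

open MinorAux

/-- Multi-indices `α ∈ ℕ³` with `α₀ + α₁ + α₂ = e`, encoded by the pair `(α₀, α₁)`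
(so that `α₂ = e - α₀ - α₁`). -/
abbrev MIdx (e : ℕ) : Type := { p : Fin (e + 1) × Fin (e + 1) // (p.1 : ℕ) + (p.2 : ℕ) ≤ e }

/-- The index set of the indeterminates of the universal ring
`A = ℤ[a₀,a₁,a₂, b₀,b₁,b₂, (u_α), (v_α)]`. -/
abbrev Idx (e : ℕ) : Type := Fin 3 ⊕ Fin 3 ⊕ MIdx e ⊕ MIdx e

/-- For generic linear forms `p = a₀x₀+a₁x₁+a₂x₂` and `p' = b₀x₀+b₁x₁+b₂x₂` with signed
`2×2` minors `m₀ = a₁b₂ − a₂b₁`, `m₁ = a₂b₀ − a₀b₂`, `m₂ = a₀b₁ − a₁b₀`, and for generic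
ternary forms `q`, `r` of degree `e`, the polynomial `m₀·q(m₀,m₁,m₂) − m₁·r(m₀,m₁,m₂)`
is irreducible in the universal coefficient ring. -/
theorem minor_combination_generic_irreducible (e : ℕ)
    (a b : Fin 3 → MvPolynomial (Idx e) ℤ)
    (ha : a = fun i => MvPolynomial.X (Sum.inl i))
    (hb : b = fun i => MvPolynomial.X (Sum.inr (Sum.inl i)))
    (m : Fin 3 → MvPolynomial (Idx e) ℤ)
    (hm0 : m 0 = a 1 * b 2 - a 2 * b 1)
    (hm1 : m 1 = a 2 * b 0 - a 0 * b 2)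
    (hm2 : m 2 = a 0 * b 1 - a 1 * b 0)
    (qval rval : MvPolynomial (Idx e) ℤ)
    (hq : qval = ∑ p : MIdx e,
      MvPolynomial.X (Sum.inr (Sum.inr (Sum.inl p))) *
        m 0 ^ (p.1.1 : ℕ) * m 1 ^ (p.1.2 : ℕ) * m 2 ^ (e - (p.1.1 : ℕ) - (p.1.2 : ℕ)))
    (hr : rval = ∑ p : MIdx e,
      MvPolynomial.X (Sum.inr (Sum.inr (Sum.inr p))) *
        m 0 ^ (p.1.1 : ℕ) * m 1 ^ (p.1.2 : ℕ) * m 2 ^ (e - (p.1.1 : ℕ) - (p.1.2 : ℕ))) :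
    Irreducible (m 0 * qval - m 1 * rval) := by
  classical
  simp only [ha, hb] at hm0 hm1 hm2
  set P : MvPolynomial (Idx e) ℤ := m 0 * qval - m 1 * rval with hP
  -- distinguished multi-indices (e,0,0) and (0,e,0)
  set t0 : MIdx e := ⟨(⟨e, Nat.lt_succ_self e⟩, ⟨0, Nat.succ_pos e⟩), by simp⟩ with ht0
  set s0 : MIdx e := ⟨(⟨0, Nat.succ_pos e⟩, ⟨e, Nat.lt_succ_self e⟩), by simp⟩ with hs0
  set T : Idx e := Sum.inr (Sum.inr (Sum.inl t0)) with hT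
  set S : Idx e := Sum.inr (Sum.inr (Sum.inr s0)) with hS
  -- `theta x` fixes the minors for any `x` that is not one of the `a`/`b` variables
  have hth_m : ∀ x : Idx e, (∀ i : Fin 3, Sum.inl i ≠ x) →
      (∀ i : Fin 3, Sum.inr (Sum.inl i) ≠ x) →
      ∀ i : Fin 3, theta x (m i) = Polynomial.C (m i) := by
    intro x hxa hxb i
    fin_cases i
    · show theta x (m 0) = Polynomial.C (m 0)
      rw [hm0]; exact theta_quad (hxa 1) (hxb 2) (hxa 2) (hxb 1)
    · show theta x (m 1) = Polynomial.C (m 1)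
      rw [hm1]; exact theta_quad (hxa 2) (hxb 0) (hxa 0) (hxb 2)
    · show theta x (m 2) = Polynomial.C (m 2)
      rw [hm2]; exact theta_quad (hxa 0) (hxb 1) (hxa 1) (hxb 0)
  have hm0ne : m 0 ≠ 0 := by
    intro h0
    have h2 : sub (Sum.inl 2) 0 (m 0) =
        MvPolynomial.X (Sum.inl 1) * MvPolynomial.X (Sum.inr (Sum.inl 2)) := by
      rw [hm0, map_sub, map_mul, map_mul, sub_X_self,
        sub_X_ne _ (by simp : (Sum.inl 1 : Idx e) ≠ Sum.inl 2),
        sub_X_ne _ (by simp : (Sum.inr (Sum.inl 2) : Idx e) ≠ Sum.inl 2),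
        sub_X_ne _ (by simp : (Sum.inr (Sum.inl 1) : Idx e) ≠ Sum.inl 2), zero_mul, sub_zero]
    rw [h0, map_zero] at h2
    exact mul_ne_zero (MvPolynomial.X_ne_zero _) (MvPolynomial.X_ne_zero _) h2.symm
  have hm1ne : m 1 ≠ 0 := by
    intro h0
    have h2 : sub (Sum.inl 0) 0 (m 1) =
        MvPolynomial.X (Sum.inl 2) * MvPolynomial.X (Sum.inr (Sum.inl 0)) := by
      rw [hm1, map_sub, map_mul, map_mul, sub_X_self,
        sub_X_ne _ (by simp : (Sum.inl 2 : Idx e) ≠ Sum.inl 0),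
        sub_X_ne _ (by simp : (Sum.inr (Sum.inl 0) : Idx e) ≠ Sum.inl 0),
        sub_X_ne _ (by simp : (Sum.inr (Sum.inl 2) : Idx e) ≠ Sum.inl 0), zero_mul, sub_zero]
    rw [h0, map_zero] at h2
    exact mul_ne_zero (MvPolynomial.X_ne_zero _) (MvPolynomial.X_ne_zero _) h2.symm
  have hTa : ∀ i : Fin 3, (Sum.inl i : Idx e) ≠ T := by intro i; rw [hT]; simp
  have hTb : ∀ i : Fin 3, (Sum.inr (Sum.inl i) : Idx e) ≠ T := by intro i; rw [hT]; simp
  have hthm0 := hth_m T hTa hTb 0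
  have hthm1 := hth_m T hTa hTb 1
  -- split off the `t0` term of `qval`
  set q0 : MvPolynomial (Idx e) ℤ := ∑ p ∈ Finset.univ.erase t0,
      MvPolynomial.X (Sum.inr (Sum.inr (Sum.inl p))) *
        m 0 ^ (p.1.1 : ℕ) * m 1 ^ (p.1.2 : ℕ) * m 2 ^ (e - (p.1.1 : ℕ) - (p.1.2 : ℕ))
    with hq0def
  have hsplit : qval = MvPolynomial.X T * m 0 ^ e + q0 := by
    rw [hq, ← Finset.add_sum_erase _ _ (Finset.mem_univ t0)]
    congr 1
    have h1 : ((t0.1.1 : ℕ)) = e := rfl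
    have h2 : ((t0.1.2 : ℕ)) = 0 := rfl
    rw [← hT]
    simp only [h1, h2, Nat.sub_zero, Nat.sub_self, pow_zero, mul_one]
  have hTq0 : theta T q0 = Polynomial.C q0 := by
    rw [hq0def, map_sum]
    have hcong : ∀ p ∈ Finset.univ.erase t0,
        theta T (MvPolynomial.X (Sum.inr (Sum.inr (Sum.inl p))) *
          m 0 ^ (p.1.1 : ℕ) * m 1 ^ (p.1.2 : ℕ) * m 2 ^ (e - (p.1.1 : ℕ) - (p.1.2 : ℕ)))
        = Polynomial.C (MvPolynomial.X (Sum.inr (Sum.inr (Sum.inl p))) *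
          m 0 ^ (p.1.1 : ℕ) * m 1 ^ (p.1.2 : ℕ) * m 2 ^ (e - (p.1.1 : ℕ) - (p.1.2 : ℕ))) := by
      intro p hp
      have hpne : (Sum.inr (Sum.inr (Sum.inl p)) : Idx e) ≠ T := by
        rw [hT]
        intro hcon
        simp only [Sum.inr.injEq, Sum.inl.injEq] at hcon
        exact (Finset.mem_erase.mp hp).1 hcon
      rw [map_mul, map_mul, map_mul, map_pow, map_pow, map_pow, theta_X_ne hpne,
        hth_m T hTa hTb 0, hth_m T hTa hTb 1, hth_m T hTa hTb 2,
        ← map_pow, ← map_pow, ← map_pow, ← map_mul, ← map_mul, ← map_mul]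
    rw [Finset.sum_congr rfl hcong, ← map_sum]
  have hTr : theta T rval = Polynomial.C rval := by
    rw [hr, map_sum]
    have hcong : ∀ p ∈ (Finset.univ : Finset (MIdx e)),
        theta T (MvPolynomial.X (Sum.inr (Sum.inr (Sum.inr p))) *
          m 0 ^ (p.1.1 : ℕ) * m 1 ^ (p.1.2 : ℕ) * m 2 ^ (e - (p.1.1 : ℕ) - (p.1.2 : ℕ)))
        = Polynomial.C (MvPolynomial.X (Sum.inr (Sum.inr (Sum.inr p))) *
          m 0 ^ (p.1.1 : ℕ) * m 1 ^ (p.1.2 : ℕ) * m 2 ^ (e - (p.1.1 : ℕ) - (p.1.2 : ℕ))) := by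
      intro p _
      have hpne : (Sum.inr (Sum.inr (Sum.inr p)) : Idx e) ≠ T := by rw [hT]; simp
      rw [map_mul, map_mul, map_mul, map_pow, map_pow, map_pow, theta_X_ne hpne,
        hth_m T hTa hTb 0, hth_m T hTa hTb 1, hth_m T hTa hTb 2,
        ← map_pow, ← map_pow, ← map_pow, ← map_mul, ← map_mul, ← map_mul]
    rw [Finset.sum_congr rfl hcong, ← map_sum]
  have hTq : theta T qval = Polynomial.X * Polynomial.C (m 0 ^ e) + Polynomial.C q0 := by
    rw [hsplit, map_add, map_mul, map_pow, theta_X_self, hthm0, ← map_pow, hTq0]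
  have hTP : theta T P = Polynomial.C (m 0 ^ (e + 1)) * Polynomial.X
      + Polynomial.C (m 0 * q0 - m 1 * rval) := by
    rw [hP, map_sub, map_mul, map_mul, hTq, hTr, hthm0, hthm1]
    rw [map_sub, map_mul, map_mul, map_pow, map_pow]
    ring
  have hdeg : (theta T P).natDegree = 1 := by
    rw [hTP]; exact Polynomial.natDegree_linear (pow_ne_zero _ hm0ne)
  have hsubc : ∀ c, sub T c P = m 0 ^ (e + 1) * c + (m 0 * q0 - m 1 * rval) := by
    intro c
    rw [← eval₂_theta, hTP]
    simp only [Polynomial.eval₂_add, Polynomial.eval₂_mul, Polynomial.eval₂_C,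
      Polynomial.eval₂_X, RingHom.id_apply]
  -- the finite set of `u`/`v` variables
  set K : Finset (Idx e) :=
      (Finset.univ.image (fun p : MIdx e => (Sum.inr (Sum.inr (Sum.inl p)) : Idx e))) ∪
      (Finset.univ.image (fun p : MIdx e => (Sum.inr (Sum.inr (Sum.inr p)) : Idx e)))
    with hK
  have hmemK : ∀ x ∈ K, (∀ i : Fin 3, (Sum.inl i : Idx e) ≠ x) ∧
      (∀ i : Fin 3, (Sum.inr (Sum.inl i) : Idx e) ≠ x) := by
    intro x hx
    rw [hK, Finset.mem_union, Finset.mem_image, Finset.mem_image] at hx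
    rcases hx with ⟨p, _, rfl⟩ | ⟨p, _, rfl⟩ <;> exact ⟨fun i => by simp, fun i => by simp⟩
  have hSK : S ∈ K := by
    rw [hK, Finset.mem_union, Finset.mem_image, Finset.mem_image, hS]
    exact Or.inr ⟨s0, Finset.mem_univ _, rfl⟩
  have huK : ∀ p : MIdx e, (Sum.inr (Sum.inr (Sum.inl p)) : Idx e) ∈ K := by
    intro p
    rw [hK, Finset.mem_union, Finset.mem_image]
    exact Or.inl ⟨p, Finset.mem_univ _, rfl⟩
  have hvK : ∀ p : MIdx e, (Sum.inr (Sum.inr (Sum.inr p)) : Idx e) ∈ K := by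
    intro p
    rw [hK, Finset.mem_union, Finset.mem_image, Finset.mem_image]
    exact Or.inr ⟨p, Finset.mem_univ _, rfl⟩
  -- the substitution killing all the `u` variables and all `v` variables except `v_{s0} ↦ 1`
  set f : Idx e → MvPolynomial (Idx e) ℤ :=
      fun y => if y = S then 1 else if y ∈ K then 0 else MvPolynomial.X y with hf
  have hf1 : ∀ y, y ∉ K → f y = MvPolynomial.X y := by
    intro y hy
    have hyS : y ≠ S := fun h => hy (h ▸ hSK)
    rw [hf]; simp only [if_neg hyS, if_neg hy]
  have hf2 : ∀ y ∈ K, ∃ n : ℤ, f y = MvPolynomial.C n := by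
    intro y hy
    by_cases h : y = S
    · exact ⟨1, by rw [hf]; simp only [if_pos h, map_one]⟩
    · exact ⟨0, by rw [hf]; simp only [if_neg h, if_pos hy, map_zero]⟩
  have hfab : ∀ i : Fin 3, f (Sum.inl i) = MvPolynomial.X (Sum.inl i)
      ∧ f (Sum.inr (Sum.inl i)) = MvPolynomial.X (Sum.inr (Sum.inl i)) := by
    intro i
    constructor <;> refine hf1 _ (fun hmem => ?_)
    · exact ((hmemK _ hmem).1 i) rfl
    · exact ((hmemK _ hmem).2 i) rfl
  have hfm : ∀ i : Fin 3, MvPolynomial.aeval f (m i) = m i := by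
    intro i
    fin_cases i
    · show MvPolynomial.aeval f (m 0) = m 0
      rw [hm0, map_sub, map_mul, map_mul, MvPolynomial.aeval_X, MvPolynomial.aeval_X,
        MvPolynomial.aeval_X, MvPolynomial.aeval_X, (hfab 1).1, (hfab 2).2, (hfab 2).1,
        (hfab 1).2]
    · show MvPolynomial.aeval f (m 1) = m 1
      rw [hm1, map_sub, map_mul, map_mul, MvPolynomial.aeval_X, MvPolynomial.aeval_X,
        MvPolynomial.aeval_X, MvPolynomial.aeval_X, (hfab 2).1, (hfab 0).2, (hfab 0).1,
        (hfab 2).2]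
    · show MvPolynomial.aeval f (m 2) = m 2
      rw [hm2, map_sub, map_mul, map_mul, MvPolynomial.aeval_X, MvPolynomial.aeval_X,
        MvPolynomial.aeval_X, MvPolynomial.aeval_X, (hfab 0).1, (hfab 1).2, (hfab 1).1,
        (hfab 0).2]
  have hfq : MvPolynomial.aeval f qval = 0 := by
    rw [hq, map_sum]
    refine Finset.sum_eq_zero fun p _ => ?_
    rw [map_mul, map_mul, map_mul, MvPolynomial.aeval_X]
    have : f (Sum.inr (Sum.inr (Sum.inl p))) = 0 := by
      rw [hf]
      have hne : (Sum.inr (Sum.inr (Sum.inl p)) : Idx e) ≠ S := by rw [hS]; simp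
      simp only [if_neg hne, if_pos (huK p)]
    rw [this, zero_mul, zero_mul, zero_mul]
  have hfr : MvPolynomial.aeval f rval = m 1 ^ e := by
    rw [hr, map_sum]
    have hcong : ∀ p ∈ (Finset.univ : Finset (MIdx e)),
        MvPolynomial.aeval f (MvPolynomial.X (Sum.inr (Sum.inr (Sum.inr p))) *
          m 0 ^ (p.1.1 : ℕ) * m 1 ^ (p.1.2 : ℕ) * m 2 ^ (e - (p.1.1 : ℕ) - (p.1.2 : ℕ)))
        = if p = s0 then m 1 ^ e else 0 := by
      intro p _
      rw [map_mul, map_mul, map_mul, MvPolynomial.aeval_X, map_pow, map_pow, map_pow,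
        hfm 0, hfm 1, hfm 2]
      by_cases h : p = s0
      · subst h
        have hfS : f (Sum.inr (Sum.inr (Sum.inr s0))) = 1 := by
          rw [hf, ← hS]; simp
        have h1 : ((s0.1.1 : ℕ)) = 0 := rfl
        have h2 : ((s0.1.2 : ℕ)) = e := rfl
        rw [hfS, if_pos rfl, h1, h2, pow_zero, Nat.sub_zero, Nat.sub_self, pow_zero,
          one_mul, one_mul, mul_one]
      · have hfv : f (Sum.inr (Sum.inr (Sum.inr p))) = 0 := by
          rw [hf]
          have hne : (Sum.inr (Sum.inr (Sum.inr p)) : Idx e) ≠ S := by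
            rw [hS]
            intro hcon
            simp only [Sum.inr.injEq] at hcon
            exact h hcon
          simp only [if_neg hne, if_pos (hvK p)]
        rw [hfv, if_neg h, zero_mul, zero_mul, zero_mul]
    rw [Finset.sum_congr rfl hcong, Finset.sum_ite_eq' Finset.univ s0 (fun _ => m 1 ^ e),
      if_pos (Finset.mem_univ s0)]
  have hfP : MvPolynomial.aeval f P = -(m 1 ^ (e + 1)) := by
    rw [hP, map_sub, map_mul, map_mul, hfq, hfr, hfm 0, hfm 1]
    ring
  -- relative primality of the first two minors
  have hrel : IsRelPrime (m 0) (m 1) := by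
    intro dd hd0 hd1
    have hv0 : (![Sum.inl 0, Sum.inl 1, Sum.inl 2, Sum.inr (Sum.inl 0), Sum.inr (Sum.inl 1),
        Sum.inr (Sum.inl 2)] : Fin 6 → Idx e) 0 = Sum.inl 0 := rfl
    set v : Fin 6 → Idx e := ![Sum.inl 0, Sum.inl 1, Sum.inl 2, Sum.inr (Sum.inl 0),
      Sum.inr (Sum.inl 1), Sum.inr (Sum.inl 2)] with hv
    have hvinj : Function.Injective v := by
      have hw : ∀ i : Fin 6, (fun x : Idx e => match x with
          | Sum.inl i => (⟨i.val, by have := i.isLt; omega⟩ : Fin 6)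
          | Sum.inr (Sum.inl i) => ⟨i.val + 3, by have := i.isLt; omega⟩
          | _ => 0) (v i) = i := by
        intro i
        fin_cases i <;> rfl
      intro i j hij
      rw [← hw i, ← hw j, hij]
    have e1 : v 1 = Sum.inl 1 := rfl
    have e5 : v 5 = Sum.inr (Sum.inl 2) := rfl
    have e2 : v 2 = Sum.inl 2 := rfl
    have e4 : v 4 = Sum.inr (Sum.inl 1) := rfl
    have e3 : v 3 = Sum.inr (Sum.inl 0) := rfl
    have e0 : v 0 = Sum.inl 0 := rfl
    refine isUnit_of_dvd_minors hvinj (d := dd) ?_ ?_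
    · rw [e1, e5, e2, e4, ← hm0]; exact hd0
    · rw [e2, e3, e0, e5, ← hm1]; exact hd1
  -- key step: a divisor of P whose theta-image is constant is a unit
  have key : ∀ g : MvPolynomial (Idx e) ℤ, g ∣ P →
      theta T g = Polynomial.C g → IsUnit g := by
    intro g hgP htg
    have hsg : ∀ c, sub T c g = g := fun c => by
      rw [← eval₂_theta, htg, Polynomial.eval₂_C, RingHom.id_apply]
    have h1 : g ∣ m 0 ^ (e + 1) := by
      have d1 : g ∣ m 0 ^ (e + 1) * 1 + (m 0 * q0 - m 1 * rval) := by
        rw [← hsubc 1, ← hsg 1]; exact map_dvd _ hgP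
      have d0 : g ∣ m 0 ^ (e + 1) * 0 + (m 0 * q0 - m 1 * rval) := by
        rw [← hsubc 0, ← hsg 0]; exact map_dvd _ hgP
      have hdd := dvd_sub d1 d0
      simpa using hdd
    have hKsub : ∀ x ∈ K, ∀ c, sub x c g = g := by
      intro x hx c
      exact sub_eq_self_of_dvd h1 (pow_ne_zero _ hm0ne)
        (by rw [map_pow, hth_m x (hmemK x hx).1 (hmemK x hx).2 0, ← map_pow]) c
    have hgf : MvPolynomial.aeval f g = g := aeval_eq_self_of_sub_eq_self hKsub hf1 hf2
    have h2 : g ∣ m 1 ^ (e + 1) := by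
      have hdd := map_dvd (MvPolynomial.aeval f) hgP
      rw [hgf, hfP] at hdd
      exact dvd_neg.mp hdd
    exact hrel.pow h1 h2
  -- conclude
  have toC : ∀ k : MvPolynomial (Idx e) ℤ, (theta T k).natDegree = 0 →
      theta T k = Polynomial.C k := by
    intro k hk
    obtain ⟨aa, haa⟩ := Polynomial.natDegree_eq_zero.mp hk
    have hid := theta_id T k
    rw [← haa, Polynomial.eval₂_C, RingHom.id_apply] at hid
    rw [← haa, hid]
  constructor
  · intro hu
    have := Polynomial.natDegree_eq_zero_of_isUnit (hu.map (theta T))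
    rw [hdeg] at this
    exact one_ne_zero this
  · intro g h hgh
    have hθ : theta T g * theta T h = theta T P := by rw [← map_mul, ← hgh]
    have hPne : theta T P ≠ 0 := fun h0 => by
      rw [h0, Polynomial.natDegree_zero] at hdeg
      exact one_ne_zero hdeg.symm
    have hgne : theta T g ≠ 0 := fun h0 => hPne (by rw [← hθ, h0, zero_mul])
    have hhne : theta T h ≠ 0 := fun h0 => hPne (by rw [← hθ, h0, mul_zero])
    have hsum : (theta T g).natDegree + (theta T h).natDegree = 1 := by
      rw [← Polynomial.natDegree_mul hgne hhne, hθ, hdeg]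
    rcases Nat.add_eq_one_iff.mp hsum with ⟨h1, _⟩ | ⟨_, h1⟩
    · exact Or.inl (key g ⟨h, hgh⟩ (toC g h1))
    · exact Or.inr (key h ⟨g, by rw [hgh, mul_comm]⟩ (toC h h1))
end

section
/- Let m ≥ 1 and e ≥ 0 be integers, and let R = ℤ[w_0,…,w_m, u_0,…,u_e, v_0,…,v_e] be the polynomial ring over ℤ in these indeterminates. Let P = Σ_{k=0}^{m} w_k·T^k, Q = Σ_{i=0}^{e} u_i·T^i and S = Σ_{i=0}^{e} v_i·T^i be generic polynomials of degrees m, e and e. Then the resultant Res(T·Q − S, P) ∈ R (the Sylvester determinant of the degree-(e+1) polynomial T·Q − S and the degree-m polynomial P) is a primitive polynomial over ℤ: the only integers dividing all of its coefficients are ±1 (equivalently, no prime number p ∈ ℤ divides Res(T·Q − S, P) in R). -/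
/-- The Sylvester matrix of two univariate polynomials `P` and `Q` over a commutative
ring, where `P` is regarded as a polynomial of (formal) degree `m` and `Q` as a
polynomial of (formal) degree `n`.  It is the `(m+n) × (m+n)` matrix whose first `n`
rows carry the (shifted) coefficients of `P` and whose last `m` rows carry the
(shifted) coefficients of `Q`. -/
def sylvesterMatrix {R : Type*} [CommRing R] (m n : ℕ) (P Q : Polynomial R) :
    Matrix (Fin (m + n)) (Fin (m + n)) R :=
  Matrix.of fun i j =>
    if (i : ℕ) < n then
      if (i : ℕ) ≤ (j : ℕ) then P.coeff ((j : ℕ) - (i : ℕ)) else 0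
    else
      if (i : ℕ) - n ≤ (j : ℕ) then Q.coeff ((j : ℕ) - ((i : ℕ) - n)) else 0

/-- The resultant of `P`, of formal degree `m`, and `Q`, of formal degree `n`:
the determinant of their `(m+n) × (m+n)` Sylvester matrix. -/
def res {R : Type*} [CommRing R] (m n : ℕ) (P Q : Polynomial R) : R :=
  (sylvesterMatrix m n P Q).det

lemma coeff_generic {R : Type*} [CommRing R] (e : ℕ) (g : Fin (e + 1) → R) (n : ℕ) :
    (∑ i : Fin (e + 1), Polynomial.C (g i) * Polynomial.X ^ (i : ℕ)).coeff n =
      if h : n < e + 1 then g ⟨n, h⟩ else 0 := by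
  rw [Polynomial.finset_sum_coeff]
  simp only [Polynomial.coeff_C_mul, Polynomial.coeff_X_pow, mul_ite, mul_one, mul_zero]
  split
  · next h =>
    rw [Finset.sum_eq_single (⟨n, h⟩ : Fin (e + 1))]
    · simp
    · intro b _ hb
      rw [if_neg]
      intro hbn
      exact hb (by ext; simp [hbn])
    · simp
  · next h =>
    apply Finset.sum_eq_zero
    intro b _
    rw [if_neg]
    omega

/-- The resultant `Res(T·Q − S, P)` of the generic polynomials `P` (degree `m ≥ 1`)
and `Q`, `S` (degree `e`) is a primitive polynomial over `ℤ`: the only integers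
dividing it (equivalently, dividing all of its coefficients) are `±1`. -/
theorem resultant_XQ_sub_S_primitive (m e : ℕ) (hm : 1 ≤ m)
    (P Q S : Polynomial (MvPolynomial (Fin (m + 1) ⊕ Fin (e + 1) ⊕ Fin (e + 1)) ℤ))
    (hP : P = ∑ k : Fin (m + 1),
      Polynomial.C (MvPolynomial.X (Sum.inl k)) * Polynomial.X ^ (k : ℕ))
    (hQ : Q = ∑ i : Fin (e + 1),
      Polynomial.C (MvPolynomial.X (Sum.inr (Sum.inl i))) * Polynomial.X ^ (i : ℕ))
    (hS : S = ∑ i : Fin (e + 1),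
      Polynomial.C (MvPolynomial.X (Sum.inr (Sum.inr i))) * Polynomial.X ^ (i : ℕ)) :
    ∀ c : ℤ, MvPolynomial.C c ∣ res (e + 1) m (Polynomial.X * Q - S) P → IsUnit c := by
  intro c hc
  set f : (Fin (m + 1) ⊕ Fin (e + 1) ⊕ Fin (e + 1)) → ℤ := fun s =>
    match s with
    | Sum.inl k => if (k : ℕ) = 0 then 1 else 0
    | Sum.inr (Sum.inl i) => if (i : ℕ) = e then 1 else 0
    | Sum.inr (Sum.inr _) => 0 with hf
  have hdvd : c ∣ MvPolynomial.eval f (res (e + 1) m (Polynomial.X * Q - S) P) := by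
    obtain ⟨r, hr⟩ := hc
    exact ⟨MvPolynomial.eval f r, by rw [hr, map_mul, MvPolynomial.eval_C]⟩
  have hAc : ∀ d : ℕ, MvPolynomial.eval f ((Polynomial.X * Q - S).coeff d) =
      if d = e + 1 then 1 else 0 := by
    intro d
    rw [Polynomial.coeff_sub]
    cases d with
    | zero =>
      rw [hS, coeff_generic, Polynomial.mul_coeff_zero, Polynomial.coeff_X_zero, zero_mul,
        dif_pos (by omega : 0 < e + 1), zero_sub, map_neg, if_neg (by omega)]
      simp [hf]
    | succ n =>
      rw [Polynomial.coeff_X_mul, hQ, hS, coeff_generic, coeff_generic, map_sub]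
      split_ifs with h1 h2 h3 h4 h5 h6 <;>
        simp only [hf, MvPolynomial.eval_X, map_zero, sub_zero, Fin.val_mk] <;>
        omega
  have hPc : ∀ d : ℕ, MvPolynomial.eval f (P.coeff d) = if d = 0 then 1 else 0 := by
    intro d
    rw [hP, coeff_generic]
    by_cases hd : d < m + 1
    · rw [dif_pos hd]
      simp only [hf, MvPolynomial.eval_X, Fin.val_mk]
    · rw [dif_neg hd, map_zero, if_neg (by omega)]
  haveI : NeZero (e + 1 + m) := ⟨by omega⟩
  set σ : Equiv.Perm (Fin (e + 1 + m)) :=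
    Equiv.addRight (⟨e + 1, by omega⟩ : Fin (e + 1 + m)) with hσ
  have hmat : (sylvesterMatrix (e + 1) m (Polynomial.X * Q - S) P).map
      (MvPolynomial.eval f) = σ.permMatrix ℤ := by
    ext i j
    rw [Matrix.map_apply, Equiv.Perm.permMatrix, PEquiv.toMatrix_toPEquiv_apply,
      Pi.single_apply]
    simp only [@eq_comm _ j (σ i)]
    have hσi : ((σ i : Fin (e + 1 + m)) : ℕ) = ((i : ℕ) + (e + 1)) % (e + 1 + m) := by
      simp [hσ, Equiv.coe_addRight, Fin.add_def]
    have hji : (σ i = j) ↔ ((j : ℕ) = ((i : ℕ) + (e + 1)) % (e + 1 + m)) := by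
      rw [Fin.ext_iff, hσi, eq_comm]
    have hi2 : (i : ℕ) < e + 1 + m := i.isLt
    have hj2 : (j : ℕ) < e + 1 + m := j.isLt
    simp only [sylvesterMatrix, Matrix.of_apply]
    by_cases him : (i : ℕ) < m
    · have hmod : ((i : ℕ) + (e + 1)) % (e + 1 + m) = (i : ℕ) + (e + 1) :=
        Nat.mod_eq_of_lt (by omega)
      rw [if_pos him]
      by_cases hij : (i : ℕ) ≤ (j : ℕ)
      · rw [if_pos hij, hAc]
        simp only [hji, hmod]
        split_ifs <;> first | rfl | omega
      · rw [if_neg hij, map_zero, if_neg (by simp only [hji, hmod]; omega)]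
    · have hmod : ((i : ℕ) + (e + 1)) % (e + 1 + m) = (i : ℕ) - m := by
        rw [Nat.mod_eq_sub_mod (by omega), Nat.mod_eq_of_lt (by omega)]
        omega
      rw [if_neg him]
      by_cases hij : (i : ℕ) - m ≤ (j : ℕ)
      · rw [if_pos hij, hPc]
        simp only [hji, hmod]
        split_ifs <;> first | rfl | omega
      · rw [if_neg hij, map_zero, if_neg (by simp only [hji, hmod]; omega)]
  have hval : MvPolynomial.eval f (res (e + 1) m (Polynomial.X * Q - S) P) =
      (Equiv.Perm.sign σ : ℤ) := by
    rw [res, RingHom.map_det, RingHom.mapMatrix_apply, hmat, Matrix.det_permutation]; norm_cast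
  rw [hval] at hdvd
  exact isUnit_of_dvd_unit hdvd
    (by rcases Int.units_eq_one_or (Equiv.Perm.sign σ) with h | h <;> rw [h] <;> simp)
end
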